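/- Let f : ℝ × ℝ → ℝ be the continuous function f(x, y) = |x − y| + x. Then every Lebesgue measurable set A ⊆ ℝ that is free for f is Lebesgue null, and every set A ⊆ ℝ with the Baire property that is free for f is meager. -/

import Mathlib

open MeasureTheory

open Filter Topology Set Metric in
/-- A free set contains no increasing 3-term arithmetic progression. -/
private lemma free_no_ap {A : Set ℝ}
    (hF : ∀ a ∈ A, ∀ b ∈ A,
      (|a - b| + a = a ∨ |a - b| + a = b) ∨ |a - b| + a ∉ A)
    {y d : ℝ} (hd : 0 < d) (h0 : y ∈ A) (h1 : y + d ∈ A) (h2 : y + 2 * d ∈ A) : False := by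
  have key : |(y + d) - y| + (y + d) = y + 2 * d := by
    rw [show (y + d) - y = d by ring, abs_of_pos hd]; ring
  rcases hF (y + d) h1 y h0 with (h | h) | h
  · rw [key] at h; linarith
  · rw [key] at h; linarith
  · rw [key] at h; exact h h2

open Filter Topology Set Metric in
private lemma measure_part {A : Set ℝ}
    (hF : ∀ a ∈ A, ∀ b ∈ A,
      (|a - b| + a = a ∨ |a - b| + a = b) ∨ |a - b| + a ∉ A)
    (hA : NullMeasurableSet A volume) : volume A = 0 := by
  by_contra hne
  -- extract a measurable subset of full measure
  obtain ⟨S, hSA, hSm, hSeq⟩ := hA.exists_measurable_subset_ae_eq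
  have hSpos : volume S ≠ 0 := by
    rwa [measure_congr hSeq]
  -- Lebesgue density point
  have hres : (volume.restrict S) ≠ 0 := by
    rwa [Ne, Measure.restrict_eq_zero]
  have hae := Besicovitch.ae_tendsto_measure_inter_div (volume : Measure ℝ) S
  have : NeBot (ae (volume.restrict S)) := ae_neBot.mpr hres
  obtain ⟨x, hx⟩ := hae.exists
  -- choose a radius with density > 7/8
  have hev : ∀ᶠ r in 𝓝[>] (0:ℝ),
      ENNReal.ofReal (7/8) < volume (S ∩ closedBall x r) / volume (closedBall x r) := by
    refine hx.eventually (lt_mem_nhds ?_)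
    exact ENNReal.ofReal_lt_one.mpr (by norm_num)
  obtain ⟨r, hrat, hr⟩ := (hev.and self_mem_nhdsWithin).exists
  replace hr : 0 < r := hr
  have hball : volume (closedBall x r) = ENNReal.ofReal (2 * r) := Real.volume_closedBall x r
  have hballne : volume (closedBall x r) ≠ 0 := by
    rw [hball, Ne, ENNReal.ofReal_eq_zero]; push_neg; linarith
  have hballfin : volume (closedBall x r) ≠ ⊤ := by rw [hball]; exact ENNReal.ofReal_ne_top
  set B : Set ℝ := S ∩ closedBall x r with hB
  have hBm : MeasurableSet B := hSm.inter measurableSet_closedBall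
  have hBμ : ENNReal.ofReal (7/8) * volume (closedBall x r) < volume B :=
    (ENNReal.lt_div_iff_mul_lt (Or.inl hballne) (Or.inl hballfin)).mp hrat
  have hBμ' : ENNReal.ofReal (7/4 * r) < volume B := by
    refine lt_of_le_of_lt (le_of_eq ?_) hBμ
    rw [hball, ← ENNReal.ofReal_mul (by norm_num)]
    ring_nf
  set d : ℝ := r / 4 with hdd
  have hd : 0 < d := by rw [hdd]; positivity
  -- translates of B
  set Y : Set ℝ := (· + d) ⁻¹' B with hY
  set Z : Set ℝ := (· + 2 * d) ⁻¹' B with hZ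
  have hYμ : volume Y = volume B := measure_preimage_add_right volume d B
  have hZμ : volume Z = volume B := measure_preimage_add_right volume (2 * d) B
  set U : Set ℝ := Icc (x - r - 2 * d) (x + r) with hU
  have hUμ : volume U = ENNReal.ofReal (2 * r + 2 * d) := by
    rw [hU, Real.volume_Icc]; ring_nf
  have hUfin : volume U ≠ ⊤ := by rw [hUμ]; exact ENNReal.ofReal_ne_top
  have hBU : B ⊆ U := by
    intro z hz
    have := hz.2
    rw [Real.closedBall_eq_Icc] at this
    exact ⟨by linarith [this.1, hd.le], this.2⟩
  have hYU : Y ⊆ U := by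
    intro z hz
    have := hz.2
    rw [Real.closedBall_eq_Icc] at this
    simp only [mem_Icc] at this
    exact ⟨by linarith [this.1], by linarith [this.2]⟩
  have hZU : Z ⊆ U := by
    intro z hz
    have := hz.2
    rw [Real.closedBall_eq_Icc] at this
    simp only [mem_Icc] at this
    exact ⟨by linarith [this.1], by linarith [this.2]⟩
  -- the triple intersection is nonempty
  have hne3 : (B ∩ Y ∩ Z).Nonempty := by
    by_contra hempty
    rw [not_nonempty_iff_eq_empty] at hempty
    have hcover : U ⊆ (U \ B) ∪ (U \ Y) ∪ (U \ Z) := by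
      intro u hu
      by_cases h1 : u ∈ B
      · by_cases h2 : u ∈ Y
        · have h3 : u ∉ Z := fun h3 => by
            rw [Set.eq_empty_iff_forall_notMem] at hempty
            exact hempty u ⟨⟨h1, h2⟩, h3⟩
          exact Or.inr ⟨hu, h3⟩
        · exact Or.inl (Or.inr ⟨hu, h2⟩)
      · exact Or.inl (Or.inl ⟨hu, h1⟩)
    have hYmeas : MeasurableSet Y := hBm.preimage (measurable_add_const d)
    have hZmeas : MeasurableSet Z := hBm.preimage (measurable_add_const (2 * d))
    have hdiffB : volume (U \ B) = volume U - volume B := measure_diff hBU hBm.nullMeasurableSet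
      (ne_top_of_le_ne_top hUfin (measure_mono hBU))
    have hdiffY : volume (U \ Y) = volume U - volume Y := measure_diff hYU hYmeas.nullMeasurableSet
      (ne_top_of_le_ne_top hUfin (measure_mono hYU))
    have hdiffZ : volume (U \ Z) = volume U - volume Z := measure_diff hZU hZmeas.nullMeasurableSet
      (ne_top_of_le_ne_top hUfin (measure_mono hZU))
    have hle : volume U ≤ volume (U \ B) + volume (U \ Y) + volume (U \ Z) :=
      le_trans (measure_mono hcover)
        (le_trans (measure_union_le _ _) (add_le_add_left (measure_union_le _ _) _))
    -- turn into real-number inequality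
    have hBfin : volume B ≠ ⊤ := ne_top_of_le_ne_top hUfin (measure_mono hBU)
    rw [hdiffB, hdiffY, hdiffZ, hYμ, hZμ] at hle
    have hBle : volume B ≤ volume U := measure_mono hBU
    -- convert to reals
    have h1 : (volume U).toReal ≤ 3 * ((volume U).toReal - (volume B).toReal) := by
      have e : (volume U - volume B).toReal = (volume U).toReal - (volume B).toReal :=
        ENNReal.toReal_sub_of_le hBle hUfin
      have := ENNReal.toReal_mono (by
          refine ENNReal.add_ne_top.mpr ⟨ENNReal.add_ne_top.mpr ⟨?_, ?_⟩, ?_⟩ <;>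
            exact ne_top_of_le_ne_top hUfin tsub_le_self) hle
      rw [ENNReal.toReal_add (ENNReal.add_ne_top.mpr
          ⟨ne_top_of_le_ne_top hUfin tsub_le_self, ne_top_of_le_ne_top hUfin tsub_le_self⟩)
          (ne_top_of_le_ne_top hUfin tsub_le_self),
        ENNReal.toReal_add (ne_top_of_le_ne_top hUfin tsub_le_self)
          (ne_top_of_le_ne_top hUfin tsub_le_self), e] at this
      linarith
    have hUval : (volume U).toReal = 2 * r + 2 * d := by
      rw [hUμ, ENNReal.toReal_ofReal (by linarith)]
    have hBval : 7/4 * r < (volume B).toReal := by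
      have := ENNReal.toReal_strict_mono hBfin hBμ'
      rwa [ENNReal.toReal_ofReal (by linarith)] at this
    rw [hUval] at h1
    have hdval : d = r / 4 := hdd
    linarith
  obtain ⟨y, ⟨⟨hyB, hyY⟩, hyZ⟩⟩ := hne3
  exact free_no_ap hF hd (hSA hyB.1) (hSA hyY.1) (hSA hyZ.1)

open Filter Topology Set Metric in
private lemma baire_part {A : Set ℝ}
    (hF : ∀ a ∈ A, ∀ b ∈ A,
      (|a - b| + a = a ∨ |a - b| + a = b) ∨ |a - b| + a ∉ A)
    (hA : BaireMeasurableSet A) : IsMeagre A := by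
  obtain ⟨U, hUo, hAU⟩ := hA.residualEq_isOpen
  by_contra hnm
  -- the symmetric difference is meagre
  have hR : {x : ℝ | (x ∈ A) = (x ∈ U)} ∈ residual ℝ := hAU
  set N : Set ℝ := {x : ℝ | (x ∈ A) = (x ∈ U)}ᶜ with hN
  have hNm : IsMeagre N := by
    rw [IsMeagre, hN, compl_compl]; exact hR
  -- U is nonempty
  have hUne : U.Nonempty := by
    rcases Set.eq_empty_or_nonempty U with h | h
    · exfalso
      apply hnm
      rw [IsMeagre]
      refine mem_of_superset hR ?_
      intro z hz hzA
      simp only [mem_setOf_eq] at hz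
      rw [hz] at hzA
      rw [h] at hzA
      exact hzA
    · exact h
  obtain ⟨x, hx⟩ := hUne
  obtain ⟨r, hr, hball⟩ := Metric.isOpen_iff.mp hUo x hx
  set d : ℝ := r / 8 with hdd
  have hd : 0 < d := by rw [hdd]; positivity
  set W : Set ℝ := Metric.ball x (r / 2) with hW
  have hWo : IsOpen W := Metric.isOpen_ball
  have hWne : W.Nonempty := by
    refine ⟨x, ?_⟩
    rw [hW, Metric.mem_ball, dist_self]
    positivity
  -- bad sets are meagre
  have hN1 : IsMeagre ((· + d) ⁻¹' N) :=
    hNm.preimage_of_isOpenMap (continuous_add_right d) (isOpenMap_add_right d)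
  have hN2 : IsMeagre ((· + 2 * d) ⁻¹' N) :=
    hNm.preimage_of_isOpenMap (continuous_add_right (2 * d)) (isOpenMap_add_right (2 * d))
  set K : Set ℝ := N ∪ (· + d) ⁻¹' N ∪ (· + 2 * d) ⁻¹' N with hK
  have hKm : IsMeagre K := by
    rw [IsMeagre, hK, compl_union, compl_union]
    exact inter_mem (inter_mem hNm hN1) hN2
  have hdense : Dense Kᶜ := dense_of_mem_residual hKm
  obtain ⟨y, hyW, hyK⟩ := hdense.inter_open_nonempty W hWo hWne
  -- the three points are in the ball hence in U
  have hyU : y ∈ U := by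
    apply hball
    have := mem_ball.mp hyW
    rw [mem_ball]
    calc dist y x < r / 2 := this
    _ < r := by linarith
  have hdy : |y - x| < r / 2 := by
    have := mem_ball.mp hyW
    rwa [Real.dist_eq] at this
  have h2 := abs_lt.mp hdy
  have hy1U : y + d ∈ U := by
    apply hball
    rw [mem_ball, Real.dist_eq, abs_lt]
    rw [hdd] at *
    constructor <;> linarith [h2.1, h2.2]
  have hy2U : y + 2 * d ∈ U := by
    apply hball
    rw [mem_ball, Real.dist_eq, abs_lt]
    rw [hdd] at *
    constructor <;> linarith [h2.1, h2.2]
  -- deduce membership in A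
  have hmem : ∀ z : ℝ, z ∈ U → z ∉ N → z ∈ A := by
    intro z hzU hzN
    rw [hN, mem_compl_iff, not_not, mem_setOf_eq] at hzN
    rw [hzN]
    exact hzU
  have hyK' : y ∉ N ∧ y + d ∉ N ∧ y + 2 * d ∉ N := by
    rw [hK] at hyK
    simp only [mem_compl_iff, mem_union, mem_preimage, not_or] at hyK
    exact ⟨hyK.1.1, hyK.1.2, hyK.2⟩
  exact free_no_ap hF hd (hmem y hyU hyK'.1) (hmem _ hy1U hyK'.2.1)
    (hmem _ hy2U hyK'.2.2)

/-- For the continuous function `f(x,y) = |x - y| + x`, every Lebesgue measurable free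
set is null and every free set with the Baire property is meager. -/
theorem free_sets_for_abs_diff_plus_x_are_small :
    ∀ A : Set ℝ,
      (∀ a ∈ A, ∀ b ∈ A,
        (|a - b| + a = a ∨ |a - b| + a = b) ∨ |a - b| + a ∉ A) →
      (NullMeasurableSet A volume → volume A = 0) ∧
      (BaireMeasurableSet A → IsMeagre A) := by
  intro A hF
  exact ⟨measure_part hF, baire_part hF⟩
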